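/- The fixed-point set of Π_E admits the following description: { α ∈ V : Q(d α) + d(Q α) = 0 } = { α ∈ V : d₀⁻¹(d α) = 0 and d₀⁻¹ α = 0 }; equivalently, E := { α : Π_E α = α } equals ker d₀⁻¹ ∩ ker(d₀⁻¹ ∘ d). -/

import Mathlib

/-- The fixed-point set of `Π_E` is
`{α : Q(dα) + d(Qα) = 0} = {α : d₀⁻¹(dα) = 0 ∧ d₀⁻¹α = 0}`, i.e.
`E = ker d₀⁻¹ ∩ ker (d₀⁻¹ ∘ d)`. -/
theorem fixedPoints_PiE_eq_ker_inter_ker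
    {V : Type*} [NormedAddCommGroup V] [InnerProductSpace ℝ V] [FiniteDimensional ℝ V]
    (d₀ dinv : V →ₗ[ℝ] V) (hd₀ : d₀ ∘ₗ d₀ = 0)
    (hpinv₁ : (LinearMap.range d₀)ᗮ ≤ LinearMap.ker dinv)
    (hpinv₂ : LinearMap.range dinv ≤ (LinearMap.ker d₀)ᗮ)
    (hpinv₃ : ∀ v : V, d₀ (dinv v) = (Submodule.orthogonalProjectionOnto (LinearMap.range d₀) v : V))
    (d : V →ₗ[ℝ] V) (hd : d ∘ₗ d = 0)
    (D : V →ₗ[ℝ] V) (hD : D = dinv ∘ₗ (d - d₀))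
    (N : ℕ) (hDnil : D ^ (N + 1) = 0)
    (P : V →ₗ[ℝ] V) (hP : P = ∑ k ∈ Finset.range (N + 1), ((-1 : ℝ)) ^ k • D ^ k)
    (Q : V →ₗ[ℝ] V) (hQ : Q = P ∘ₗ dinv)
    (PiE : V →ₗ[ℝ] V) (hPiE : PiE = LinearMap.id - Q ∘ₗ d - d ∘ₗ Q) :
    {α : V | Q (d α) + d (Q α) = 0} =
      {α : V | dinv (d α) = 0 ∧ dinv α = 0} ∧
    {α : V | PiE α = α} =
      ↑(LinearMap.ker dinv ⊓ LinearMap.ker (dinv ∘ₗ d)) := by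
  -- basic facts
  have hRle : LinearMap.range d₀ ≤ LinearMap.ker d₀ := by
    rintro _ ⟨x, rfl⟩
    simpa using LinearMap.congr_fun hd₀ x
  have hker : (LinearMap.ker d₀)ᗮ ≤ LinearMap.ker dinv :=
    le_trans (Submodule.orthogonal_le hRle) hpinv₁
  have hd₀dinv : ∀ x : V, dinv (d₀ (dinv x)) = dinv x := by
    intro x
    have hmem : x - d₀ (dinv x) ∈ LinearMap.ker dinv := by
      apply hpinv₁
      rw [hpinv₃]
      exact (LinearMap.range d₀).sub_starProjection_mem_orthogonal x
    have h := LinearMap.mem_ker.mp hmem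
    rw [map_sub, sub_eq_zero] at h
    exact h.symm
  have hDran : ∀ z : V, D z ∈ LinearMap.range dinv := by
    intro z; rw [hD]; exact ⟨_, rfl⟩
  have hDk : ∀ (k : ℕ) (z : V), z ∈ LinearMap.range dinv →
      (D ^ k) z ∈ LinearMap.range dinv := by
    intro k
    induction k with
    | zero => intro z hz; simpa using hz
    | succ n ih =>
        intro z hz
        rw [pow_succ]
        exact ih _ (hDran z)
  have hQran : ∀ x : V, Q x ∈ LinearMap.range dinv := by
    intro x
    rw [hQ, hP]
    simp only [LinearMap.comp_apply, LinearMap.sum_apply, LinearMap.smul_apply]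
    exact Submodule.sum_mem _ fun k _ => Submodule.smul_mem _ _ (hDk k _ ⟨x, rfl⟩)
  have hdinvQ : ∀ x : V, dinv (Q x) = 0 := fun x => hker (hpinv₂ (hQran x))
  -- geometric series : (1 + D) * P = 1 = P * (1 + D)
  have hPg : P = ∑ k ∈ Finset.range (N + 1), (-D) ^ k := by
    rw [hP]
    refine Finset.sum_congr rfl fun k _ => ?_
    rw [← neg_one_smul ℝ D, smul_pow]
  have hx : (-D) ^ (N + 1) = 0 := by
    rw [← neg_one_smul ℝ D, smul_pow, hDnil, smul_zero]
  have hgeom₁ : (1 + D) * P = 1 := by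
    rw [hPg]
    have h := mul_geom_sum (-D) (N + 1)
    have h2 : (1 + D) * ∑ k ∈ Finset.range (N + 1), (-D) ^ k
        = -((-D - 1) * ∑ k ∈ Finset.range (N + 1), (-D) ^ k) := by
      noncomm_ring
    rw [h2, h, hx]
    noncomm_ring
  have hgeom₂ : P * (1 + D) = 1 := by
    rw [hPg]
    have h := geom_sum_mul (-D) (N + 1)
    have h2 : (∑ k ∈ Finset.range (N + 1), (-D) ^ k) * (1 + D)
        = -((∑ k ∈ Finset.range (N + 1), (-D) ^ k) * (-D - 1)) := by
      noncomm_ring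
    rw [h2, h, hx]
    noncomm_ring
  have hP1 : ∀ y : V, P y + D (P y) = y := by
    intro y
    have := LinearMap.congr_fun hgeom₁ y
    simpa [Module.End.mul_apply, LinearMap.add_apply] using this
  have hP2 : ∀ y : V, P (y + D y) = y := by
    intro y
    have := LinearMap.congr_fun hgeom₂ y
    simpa [Module.End.mul_apply, LinearMap.add_apply] using this
  -- the key pointwise equivalence
  have key : ∀ α : V, Q (d α) + d (Q α) = 0 ↔ (dinv (d α) = 0 ∧ dinv α = 0) := by
    intro α
    constructor
    · intro h
      have h1 : dinv (Q (d α)) + dinv (d (Q α)) = 0 := by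
        rw [← map_add, h, map_zero]
      rw [hdinvQ, zero_add] at h1
      obtain ⟨s, hs⟩ := hQran α
      have h2 : D (Q α) = -Q α := by
        rw [hD]
        simp only [LinearMap.comp_apply, LinearMap.sub_apply, map_sub]
        rw [h1, ← hs, hd₀dinv, hs, zero_sub]
      have h3 : Q α = 0 := by
        have := hP2 (Q α)
        rw [h2, add_neg_cancel, map_zero] at this
        exact this.symm
      have h4 : Q (d α) = 0 := by
        have := h
        rw [h3, map_zero, add_zero] at this
        exact this
      have hQα : Q α = P (dinv α) := by rw [hQ]; rfl
      have hQdα : Q (d α) = P (dinv (d α)) := by rw [hQ]; rfl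
      constructor
      · have := hP1 (dinv (d α))
        rw [← hQdα, h4, map_zero, add_zero] at this
        exact this.symm
      · have := hP1 (dinv α)
        rw [← hQα, h3, map_zero, add_zero] at this
        exact this.symm
    · rintro ⟨h1, h2⟩
      have hQα : Q α = 0 := by rw [hQ, LinearMap.comp_apply, h2, map_zero]
      have hQdα : Q (d α) = 0 := by rw [hQ, LinearMap.comp_apply, h1, map_zero]
      rw [hQα, hQdα, map_zero, add_zero]
  constructor
  · ext α
    simpa using key α
  · ext α
    simp only [Set.mem_setOf_eq, hPiE, SetLike.mem_coe, Submodule.mem_inf,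
      LinearMap.mem_ker, LinearMap.comp_apply, LinearMap.sub_apply,
      LinearMap.id_apply]
    rw [sub_sub, sub_eq_self]
    rw [key α]
    exact and_comm
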